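/- Let L_δ : L²([0,1]) → L²([0,1]), δ ∈ [0, δ̄) with δ̄ > 0, be a family of compact, integral-preserving bounded linear operators such that L₀ satisfies the mixing condition (A1), and let f₀ be the unique fixed point of L₀ with ∫ f₀ dm = 1. Assume: (a) there exists K ≥ 0 with ‖L_δ − L₀‖_{L²→L²} ≤ K δ for all δ ∈ [0, δ̄); (b) there exists f̂ ∈ V with ‖(L_δ − L₀) f₀ / δ − f̂‖₂ → 0 as δ → 0⁺. Then there exists δ₂ > 0 such that for each δ ∈ [0, δ₂) the operator L_δ has a unique fixed point f_δ with ∫ f_δ dm = 1; moreover ‖(f_δ − f₀)/δ − h‖₂ → 0 as δ → 0⁺, where h is the unique element of V satisfying h − L₀ h = f̂. -/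

import Mathlib

open MeasureTheory

/-- Lebesgue measure restricted to the unit interval `[0,1]`. -/
noncomputable def μ01 : Measure ℝ := volume.restrict (Set.Icc (0 : ℝ) 1)



/-- In a complete normed ring, a perturbation of a unit `u` by `t` with
`‖u⁻¹ t‖ ≤ 1/2` is a unit, with controlled inverse norm. -/
theorem aux_unit_perturb {R : Type*} [NormedRing R] [CompleteSpace R]
    (hone : ‖(1 : R)‖ ≤ 1)
    (u : Rˣ) (t : R) (h : ‖(↑u⁻¹ : R) * t‖ ≤ 1 / 2) :
    ∃ v : Rˣ, (↑v : R) = ↑u - t ∧ ‖(↑v⁻¹ : R)‖ ≤ 2 * ‖(↑u⁻¹ : R)‖ := by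
  have hlt : ‖(↑u⁻¹ : R) * t‖ < 1 := lt_of_le_of_lt h (by norm_num)
  set e : Rˣ := Units.oneSub ((↑u⁻¹ : R) * t) hlt with he
  have heval : (↑e : R) = 1 - (↑u⁻¹ : R) * t := rfl
  have heinv : ‖(↑e⁻¹ : R)‖ ≤ 2 := by
    have h1 : (↑e⁻¹ : R) * (↑e : R) = 1 := Units.inv_mul e
    have h2 : (↑e⁻¹ : R) = 1 + (↑e⁻¹ : R) * ((↑u⁻¹ : R) * t) := by
      have := h1
      rw [heval, mul_sub, mul_one] at this
      have h3 : (↑e⁻¹ : R) - 1 = (↑e⁻¹ : R) * ((↑u⁻¹ : R) * t) := by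
        rw [← this]; abel
      exact (eq_add_of_sub_eq h3).trans (add_comm _ _)
    have h4 : ‖(↑e⁻¹ : R)‖ ≤ 1 + ‖(↑e⁻¹ : R)‖ * ‖(↑u⁻¹ : R) * t‖ := by
      calc ‖(↑e⁻¹ : R)‖ = ‖1 + (↑e⁻¹ : R) * ((↑u⁻¹ : R) * t)‖ := by rw [← h2]
        _ ≤ ‖(1 : R)‖ + ‖(↑e⁻¹ : R) * ((↑u⁻¹ : R) * t)‖ := norm_add_le _ _
        _ ≤ 1 + ‖(↑e⁻¹ : R)‖ * ‖(↑u⁻¹ : R) * t‖ :=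
            add_le_add hone (norm_mul_le _ _)
    nlinarith [norm_nonneg (↑e⁻¹ : R), h, norm_nonneg ((↑u⁻¹ : R) * t)]
  refine ⟨u * e, ?_, ?_⟩
  · show (↑u : R) * (↑e : R) = ↑u - t
    rw [heval, mul_sub, mul_one, ← mul_assoc, Units.mul_inv, one_mul]
  · have : ((↑(u * e)⁻¹ : R)) = (↑e⁻¹ : R) * (↑u⁻¹ : R) := by
      rw [mul_inv_rev]; rfl
    rw [this]
    calc ‖(↑e⁻¹ : R) * (↑u⁻¹ : R)‖ ≤ ‖(↑e⁻¹ : R)‖ * ‖(↑u⁻¹ : R)‖ := norm_mul_le _ _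
      _ ≤ 2 * ‖(↑u⁻¹ : R)‖ := by gcongr

/-- Key invertibility lemma: if `T` is a compact operator on a Banach space whose
powers tend to zero pointwise, then `1 - T` is invertible. -/
theorem aux_isUnit_one_sub {X : Type*} [NormedAddCommGroup X] [NormedSpace ℝ X] [CompleteSpace X]
    (T : X →L[ℝ] X) (hcomp : IsCompactOperator T)
    (hmix : ∀ x : X, Filter.Tendsto (fun n : ℕ => ‖(T ^ n) x‖) Filter.atTop (nhds 0)) :
    IsUnit (1 - T) := by
  obtain ⟨M, hM⟩ : ∃ M, ∀ n : ℕ, ‖T ^ n‖ ≤ M := by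
    apply banach_steinhaus
    intro x
    obtain ⟨C, hC⟩ := (hmix x).bddAbove_range
    exact ⟨C, fun n => hC ⟨n, rfl⟩⟩
  set M' : ℝ := max M 1 with hM'def
  have hM'pos : (0:ℝ) < M' := lt_of_lt_of_le one_pos (le_max_right _ _)
  have hM'n : ∀ k : ℕ, ‖T ^ k‖ ≤ M' := fun k => (hM k).trans (le_max_left _ _)
  obtain ⟨n, hn⟩ : ∃ n : ℕ, ‖T ^ (n + 1)‖ < 1 := by
    have hS : IsCompact (closure (⇑T '' Metric.closedBall 0 1)) :=
      IsCompactOperator.isCompact_closure_image_closedBall (f := (T : X →ₗ[ℝ] X)) hcomp 1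
    have htb := hS.totallyBounded
    set ε0 : ℝ := 1 / (4 * M') with hε0
    have hε0pos : 0 < ε0 := by positivity
    obtain ⟨t, htfin, htsub⟩ := (Metric.totallyBounded_iff).mp (htb.subset subset_closure) ε0 hε0pos
    have hev : ∀ᶠ m : ℕ in Filter.atTop, ∀ y ∈ t, ‖(T ^ m) y‖ < 1/4 := by
      rw [Filter.eventually_all_finite htfin]
      intro y _
      exact (hmix y).eventually (gt_mem_nhds (by norm_num))
    obtain ⟨m, hm⟩ := hev.exists
    refine ⟨m, lt_of_le_of_lt (ContinuousLinearMap.opNorm_le_of_unit_norm (by norm_num) ?_)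
      (by norm_num : (1:ℝ)/2 < 1)⟩
    intro x hx
    have hTx : T x ∈ ⇑T '' Metric.closedBall 0 1 :=
      ⟨x, mem_closedBall_zero_iff.mpr (le_of_eq hx), rfl⟩
    obtain ⟨y, hyt, hy⟩ := Set.mem_iUnion₂.mp (htsub hTx)
    have hdist : ‖T x - y‖ < ε0 := by rwa [Metric.mem_ball, dist_eq_norm] at hy
    have key : (T ^ (m+1)) x = (T ^ m) (T x - y) + (T ^ m) y := by
      rw [map_sub, sub_add_cancel, pow_succ, ContinuousLinearMap.mul_apply]
    have hMε : M' * ε0 = 1/4 := by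
      rw [hε0]; field_simp
    calc ‖(T ^ (m+1)) x‖ ≤ ‖(T ^ m) (T x - y)‖ + ‖(T ^ m) y‖ := by
          rw [key]; exact norm_add_le _ _
      _ ≤ M' * ε0 + 1/4 := by
          refine add_le_add ?_ (le_of_lt (hm y hyt))
          calc ‖(T ^ m) (T x - y)‖ ≤ ‖T ^ m‖ * ‖T x - y‖ := (T ^ m).le_opNorm _
            _ ≤ M' * ε0 := mul_le_mul (hM'n m) (le_of_lt hdist) (norm_nonneg _)
                (le_of_lt hM'pos)
      _ ≤ 1/2 := by rw [hMε]; norm_num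
  set Sg : X →L[ℝ] X := ∑ i ∈ Finset.range (n+1), T ^ i with hSgdef
  have hcommSg : Commute (1 - T) Sg :=
    Commute.sub_left (Commute.one_left _)
      (Commute.sum_right _ _ _ (fun i _ => (Commute.refl T).pow_right i))
  have hgeom : Sg * (1 - T) = 1 - T ^ (n+1) := by
    have h := geom_sum_mul T (n+1)
    calc Sg * (1 - T) = -(Sg * (T - 1)) := by rw [← mul_neg, neg_sub]
      _ = -(T ^ (n+1) - 1) := by rw [hSgdef, h]
      _ = 1 - T ^ (n+1) := neg_sub _ _
  set e : (X →L[ℝ] X)ˣ := Units.oneSub (T ^ (n+1)) hn with hedef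
  have heval : (↑e : X →L[ℝ] X) = 1 - T ^ (n+1) := rfl
  have hcomm2 : Commute (1 - T) (↑e⁻¹ : X →L[ℝ] X) := by
    apply Commute.units_inv_right
    show Commute (1 - T) (↑e : X →L[ℝ] X)
    rw [heval]
    exact Commute.sub_right (Commute.one_right _)
      (Commute.sub_left (Commute.one_left _) ((Commute.refl T).pow_right _))
  refine ⟨⟨1 - T, Sg * (↑e⁻¹ : X →L[ℝ] X), ?_, ?_⟩, rfl⟩
  · calc (1 - T) * (Sg * ↑e⁻¹) = ((1 - T) * Sg) * ↑e⁻¹ := (mul_assoc _ _ _).symm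
      _ = (Sg * (1 - T)) * ↑e⁻¹ := by rw [hcommSg.eq]
      _ = (↑e : X →L[ℝ] X) * ↑e⁻¹ := by rw [hgeom, heval]
      _ = 1 := Units.mul_inv e
  · calc (Sg * ↑e⁻¹) * (1 - T) = Sg * (↑e⁻¹ * (1 - T)) := mul_assoc _ _ _
      _ = Sg * ((1 - T) * ↑e⁻¹) := by rw [← hcomm2.eq]
      _ = (Sg * (1 - T)) * ↑e⁻¹ := (mul_assoc _ _ _).symm
      _ = (↑e : X →L[ℝ] X) * ↑e⁻¹ := by rw [hgeom, heval]
      _ = 1 := Units.mul_inv e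


set_option maxHeartbeats 1000000 in
set_option synthInstance.maxHeartbeats 400000 in
/-- Abstract form of the linear-response theorem on a real Banach space,
with an abstract continuous linear functional `Il` playing the role of the integral. -/
theorem aux_linear_response {E : Type*} [NormedAddCommGroup E] [NormedSpace ℝ E]
    [CompleteSpace E] (Il : E →L[ℝ] ℝ)
    (δbar : ℝ) (hδbar : 0 < δbar) (L : ℝ → (E →L[ℝ] E))
    (hcomp : ∀ δ ∈ Set.Ico (0 : ℝ) δbar, IsCompactOperator (L δ))
    (hint : ∀ δ ∈ Set.Ico (0 : ℝ) δbar, ∀ g : E, Il (L δ g) = Il g)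
    (hmix : ∀ g : E, Il g = 0 →
      Filter.Tendsto (fun n : ℕ => ‖((L 0) ^ n) g‖) Filter.atTop (nhds 0))
    (f₀ : E) (hf₀fix : L 0 f₀ = f₀) (hf₀int : Il f₀ = 1)
    (K : ℝ) (hK : 0 ≤ K)
    (hLip : ∀ δ ∈ Set.Ico (0 : ℝ) δbar, ‖L δ - L 0‖ ≤ K * δ)
    (fhat : E) (hfhatV : Il fhat = 0)
    (hderiv : Filter.Tendsto (fun δ : ℝ => ‖δ⁻¹ • ((L δ - L 0) f₀) - fhat‖)
      (nhdsWithin 0 (Set.Ioi 0)) (nhds 0)) :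
    ∃ δ₂ : ℝ, 0 < δ₂ ∧ δ₂ ≤ δbar ∧
      (∀ δ ∈ Set.Ico (0 : ℝ) δ₂,
        ∃! fδ : E, L δ fδ = fδ ∧ Il fδ = 1) ∧
      (∀ fam : ℝ → E,
        (∀ δ ∈ Set.Ico (0 : ℝ) δ₂, L δ (fam δ) = fam δ ∧ Il (fam δ) = 1) →
        ∀ h : E, Il h = 0 → h - L 0 h = fhat →
          Filter.Tendsto (fun δ : ℝ => ‖δ⁻¹ • (fam δ - f₀) - h‖)
            (nhdsWithin 0 (Set.Ioi 0)) (nhds 0)) := by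
  classical
  -- the invariant subspace of zero-integral elements
  set V : Submodule ℝ (E) := Il.ker with hVdef
  have hVclosed : IsClosed (V : Set (E)) := ContinuousLinearMap.isClosed_ker Il
  haveI : CompleteSpace V := hVclosed.completeSpace_coe
  have hmemV : ∀ g : E, g ∈ V ↔ Il g = 0 := fun g => by
    rw [hVdef, LinearMap.mem_ker, ContinuousLinearMap.coe_coe]
  have h0mem : (0:ℝ) ∈ Set.Ico (0:ℝ) δbar := ⟨le_refl _, hδbar⟩
  -- a globally defined modification of the family
  set L' : ℝ → (E →L[ℝ] E) :=
    fun δ => if δ ∈ Set.Ico (0:ℝ) δbar then L δ else 1 with hL'def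
  have hL'eq : ∀ δ ∈ Set.Ico (0:ℝ) δbar, L' δ = L δ := fun δ hδ => if_pos hδ
  have hpres : ∀ δ : ℝ, ∀ x : ↥V, ((L' δ).comp V.subtypeL) x ∈ V := by
    intro δ x
    rw [ContinuousLinearMap.comp_apply, Submodule.subtypeL_apply]
    by_cases hδ : δ ∈ Set.Ico (0:ℝ) δbar
    · rw [hL'eq δ hδ, hmemV, hint δ hδ]
      exact (hmemV _).mp x.2
    · simp only [hL'def, if_neg hδ, ContinuousLinearMap.one_apply]
      exact x.2
  -- the restricted operators
  set T : ℝ → (↥V →L[ℝ] ↥V) :=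
    fun δ => ((L' δ).comp V.subtypeL).codRestrict V (hpres δ) with hTdef
  have hTapp : ∀ (δ : ℝ) (x : ↥V), ((T δ x : E)) = L' δ ↑x := by
    intro δ x; rfl
  have hTpow : ∀ (k : ℕ) (x : ↥V), (((T 0)^k) x : E) = ((L 0)^k) ↑x := by
    intro k
    induction k with
    | zero => intro x; simp
    | succ k ih =>
        intro x
        have hx : ((T 0 x : E)) = L 0 ↑x := by rw [hTapp 0 x, hL'eq 0 h0mem]
        rw [pow_succ, ContinuousLinearMap.mul_apply, ih (T 0 x), hx, pow_succ,
          ContinuousLinearMap.mul_apply]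
  have hTsub : ∀ δ ∈ Set.Ico (0:ℝ) δbar, ‖T δ - T 0‖ ≤ K * δ := by
    intro δ hδ
    refine ContinuousLinearMap.opNorm_le_bound _ (mul_nonneg hK hδ.1) ?_
    intro x
    have hval : (((T δ - T 0) x : ↥V) : E) = (L δ - L 0) ↑x := by
      simp [ContinuousLinearMap.sub_apply, hTapp, hL'eq δ hδ, hL'eq 0 h0mem]
    have h2 : ‖(T δ - T 0) x‖ = ‖((T δ - T 0) x : E)‖ :=
      (Submodule.norm_coe _).symm
    rw [h2, hval]
    calc ‖(L δ - L 0) (↑x : E)‖ ≤ ‖L δ - L 0‖ * ‖(↑x : E)‖ :=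
          (L δ - L 0).le_opNorm _
      _ ≤ (K*δ) * ‖x‖ := by
          rw [Submodule.norm_coe]
          exact mul_le_mul_of_nonneg_right (hLip δ hδ) (norm_nonneg _)
  have hmixT : ∀ x : ↥V, Filter.Tendsto (fun k : ℕ => ‖((T 0)^k) x‖) Filter.atTop (nhds 0) := by
    intro x
    have hx0 : Il ↑x = 0 := (hmemV _).mp x.2
    have h2 := hmix ↑x hx0
    have heq : (fun k : ℕ => ‖((T 0)^k) x‖)
        = fun k : ℕ => ‖((L 0)^k) (↑x : E)‖ := by
      funext k; rw [← hTpow k x, Submodule.norm_coe]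
    rw [heq]; exact h2
  have hcompT : IsCompactOperator (T 0) := by
    have h1 : IsCompactOperator (L' 0) := by rw [hL'eq 0 h0mem]; exact hcomp 0 h0mem
    exact (h1.comp_clm V.subtypeL).codRestrict (hpres 0) hVclosed
  obtain ⟨u0, hu0⟩ : IsUnit ((1 : ↥V →L[ℝ] ↥V) - T 0) :=
    aux_isUnit_one_sub (T 0) hcompT hmixT
  set C : ℝ := ‖((u0⁻¹ : (↥V →L[ℝ] ↥V)ˣ) : ↥V →L[ℝ] ↥V)‖ with hCdef
  have hmulVle : ∀ (a b : ↥V →L[ℝ] ↥V), ‖a * b‖ ≤ ‖a‖ * ‖b‖ := fun a b =>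
    ContinuousLinearMap.opNorm_comp_le a b
  have hC0 : 0 ≤ C := by
    rw [hCdef]; exact norm_nonneg ((u0⁻¹ : (↥V →L[ℝ] ↥V)ˣ) : ↥V →L[ℝ] ↥V)
  set D : ℝ := (C+1)*(K+1) with hDdef
  have hD1 : (1:ℝ) ≤ D := by nlinarith
  have hD0 : (0:ℝ) < D := lt_of_lt_of_le one_pos hD1
  set δ₂ : ℝ := min δbar (1/(2*D)) with hδ₂def
  have hδ₂pos : 0 < δ₂ := lt_min hδbar (by positivity)
  have hδ₂bar : δ₂ ≤ δbar := min_le_left _ _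
  have hsub : ∀ δ ∈ Set.Ico (0:ℝ) δ₂, δ ∈ Set.Ico (0:ℝ) δbar :=
    fun δ hδ => ⟨hδ.1, lt_of_lt_of_le hδ.2 hδ₂bar⟩
  have hone1 : ‖(1 : ↥V →L[ℝ] ↥V)‖ ≤ 1 := by
    rw [ContinuousLinearMap.one_def]; exact ContinuousLinearMap.norm_id_le
  -- uniform invertibility of `1 - T δ`
  have key : ∀ δ ∈ Set.Ico (0:ℝ) δ₂, ∃ u : (↥V →L[ℝ] ↥V)ˣ,
      ((u : ↥V →L[ℝ] ↥V)) = 1 - T δ ∧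
      ‖((u⁻¹ : (↥V →L[ℝ] ↥V)ˣ) : ↥V →L[ℝ] ↥V)‖ ≤ 2*C := by
    intro δ hδ
    have hδ' := hsub δ hδ
    have hδle : δ ≤ 1/(2*D) := le_of_lt (lt_of_lt_of_le hδ.2 (min_le_right _ _))
    have ht : ‖((u0⁻¹ : (↥V →L[ℝ] ↥V)ˣ) : ↥V →L[ℝ] ↥V) * (T δ - T 0)‖ ≤ 1/2 := by
      calc ‖((u0⁻¹ : (↥V →L[ℝ] ↥V)ˣ) : ↥V →L[ℝ] ↥V) * (T δ - T 0)‖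
          ≤ C * ‖T δ - T 0‖ := hmulVle _ _
        _ ≤ C * (K*δ) := mul_le_mul_of_nonneg_left (hTsub δ hδ') hC0
        _ ≤ D * δ := by rw [hDdef]; nlinarith [hδ.1]
        _ ≤ 1/2 := by
            calc D * δ ≤ D * (1/(2*D)) := mul_le_mul_of_nonneg_left hδle (le_of_lt hD0)
              _ = 1/2 := by field_simp
    obtain ⟨v, hv, hvnorm⟩ := aux_unit_perturb hone1 u0 (T δ - T 0) ht
    refine ⟨v, ?_, hvnorm⟩
    rw [hv, hu0]; abel
  -- the canonical perturbation vector
  have hwmem : ∀ δ ∈ Set.Ico (0:ℝ) δbar, (L δ - L 0) f₀ ∈ V := by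
    intro δ hδ
    refine LinearMap.mem_ker.mpr ?_
    rw [ContinuousLinearMap.sub_apply, map_sub, ContinuousLinearMap.coe_coe, hint δ hδ, hint 0 h0mem, sub_self]
  refine ⟨δ₂, hδ₂pos, hδ₂bar, ?_, ?_⟩
  · -- existence and uniqueness of normalized fixed points
    intro δ hδ
    obtain ⟨u, hu, -⟩ := key δ hδ
    have hδ' := hsub δ hδ
    set w : ↥V := ⟨(L δ - L 0) f₀, hwmem δ hδ'⟩ with hwdef
    set v : ↥V := ((u⁻¹ : (↥V →L[ℝ] ↥V)ˣ) : ↥V →L[ℝ] ↥V) w with hvdef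
    have huv : ((u : ↥V →L[ℝ] ↥V)) v = w := by
      rw [hvdef, ← ContinuousLinearMap.mul_apply, Units.mul_inv,
        ContinuousLinearMap.one_apply]
    have hvE : (↑v : E) - L δ ↑v = L δ f₀ - L 0 f₀ := by
      have h1 := congrArg (Subtype.val) huv
      rw [hu] at h1
      rw [ContinuousLinearMap.sub_apply, ContinuousLinearMap.one_apply,
        Submodule.coe_sub, hTapp δ v, hL'eq δ hδ'] at h1
      rw [h1]
      simp [hwdef, ContinuousLinearMap.sub_apply]
    have hfix : L δ (f₀ + ↑v) = f₀ + ↑v := by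
      have hLv : L δ (↑v : E) = ↑v - (L δ f₀ - L 0 f₀) := by
        rw [← hvE]; abel
      rw [map_add, hLv, hf₀fix]
      abel
    have hv0 : Il ↑v = 0 := LinearMap.mem_ker.mp v.2
    have hintfδ : Il (f₀ + (↑v : E)) = 1 := by
      rw [map_add, hv0, add_zero, hf₀int]
    refine ⟨f₀ + ↑v, ⟨hfix, hintfδ⟩, ?_⟩
    intro y hy
    have hdmem : y - (f₀ + ↑v) ∈ V := by
      refine LinearMap.mem_ker.mpr ?_
      rw [map_sub, ContinuousLinearMap.coe_coe, hy.2, hintfδ, sub_self]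
    set d : ↥V := ⟨y - (f₀ + ↑v), hdmem⟩ with hddef
    have hd0 : ((u : ↥V →L[ℝ] ↥V)) d = 0 := by
      rw [hu]
      apply Subtype.ext
      rw [ContinuousLinearMap.sub_apply, ContinuousLinearMap.one_apply,
        Submodule.coe_sub, hTapp δ d, hL'eq δ hδ']
      show (↑d : E) - L δ ↑d = ((0 : ↥V) : E)
      have : L δ (↑d : E) = ↑d := by
        show L δ (y - (f₀ + ↑v)) = y - (f₀ + ↑v)
        rw [map_sub, hy.1, hfix]
      rw [this, sub_self, Submodule.coe_zero]
    have hdz : d = 0 := by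
      have h2 := congrArg (fun z => ((u⁻¹ : (↥V →L[ℝ] ↥V)ˣ) : ↥V →L[ℝ] ↥V) z) hd0
      simpa [← ContinuousLinearMap.mul_apply, Units.inv_mul] using h2
    have h3 := congrArg (Subtype.val) hdz
    rw [hddef] at h3
    exact sub_eq_zero.mp h3
  · -- linear response
    intro fam hfam h hhint hhfix
    have hhmem : h ∈ V := LinearMap.mem_ker.mpr hhint
    have hfhatmem : fhat ∈ V := LinearMap.mem_ker.mpr hfhatV
    set hV : ↥V := ⟨h, hhmem⟩ with hhVdef
    set fhatV : ↥V := ⟨fhat, hfhatmem⟩ with hfhatVdef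
    have hid : ((u0 : ↥V →L[ℝ] ↥V)) hV = fhatV := by
      rw [hu0]
      apply Subtype.ext
      rw [ContinuousLinearMap.sub_apply, ContinuousLinearMap.one_apply,
        Submodule.coe_sub, hTapp 0 hV, hL'eq 0 h0mem]
      exact hhfix
    have hhinv : hV = ((u0⁻¹ : (↥V →L[ℝ] ↥V)ˣ) : ↥V →L[ℝ] ↥V) fhatV := by
      rw [← hid, ← ContinuousLinearMap.mul_apply, Units.inv_mul,
        ContinuousLinearMap.one_apply]
    have hbound : ∀ δ : ℝ, δ ∈ Set.Ioo (0:ℝ) δ₂ →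
        ‖δ⁻¹ • (fam δ - f₀) - h‖
          ≤ 2*C*‖δ⁻¹ • ((L δ - L 0) f₀) - fhat‖ + (2*C*C*(K*‖fhat‖))*δ := by
      intro δ hδo
      have hδ : δ ∈ Set.Ico (0:ℝ) δ₂ := ⟨le_of_lt hδo.1, hδo.2⟩
      have hδ' := hsub δ hδ
      obtain ⟨u, hu, hunorm⟩ := key δ hδ
      obtain ⟨hfamfix, hfamint⟩ := hfam δ hδ
      have hvmem : fam δ - f₀ ∈ V := LinearMap.mem_ker.mpr
        (by rw [map_sub, ContinuousLinearMap.coe_coe, hfamint, hf₀int, sub_self])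
      set vδ : ↥V := ⟨fam δ - f₀, hvmem⟩ with hvδdef
      set wδ : ↥V := ⟨(L δ - L 0) f₀, hwmem δ hδ'⟩ with hwδdef
      have h1 : ((u : ↥V →L[ℝ] ↥V)) vδ = wδ := by
        rw [hu]
        apply Subtype.ext
        rw [ContinuousLinearMap.sub_apply, ContinuousLinearMap.one_apply,
          Submodule.coe_sub, hTapp δ vδ, hL'eq δ hδ']
        show (fam δ - f₀) - L δ (fam δ - f₀) = ((L δ - L 0) f₀ : E)
        rw [map_sub, hfamfix, ContinuousLinearMap.sub_apply, hf₀fix]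
        abel
      have h2 : vδ = ((u⁻¹ : (↥V →L[ℝ] ↥V)ˣ) : ↥V →L[ℝ] ↥V) wδ := by
        rw [← h1, ← ContinuousLinearMap.mul_apply, Units.inv_mul,
          ContinuousLinearMap.one_apply]
      have hdecomp : δ⁻¹ • vδ - hV =
          ((u⁻¹ : (↥V →L[ℝ] ↥V)ˣ) : ↥V →L[ℝ] ↥V) (δ⁻¹ • wδ - fhatV)
          + (((u⁻¹ : (↥V →L[ℝ] ↥V)ˣ) : ↥V →L[ℝ] ↥V)
              - ((u0⁻¹ : (↥V →L[ℝ] ↥V)ˣ) : ↥V →L[ℝ] ↥V)) fhatV := by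
        rw [h2, hhinv, map_sub, _root_.map_smul, ContinuousLinearMap.sub_apply]
        abel
      have hcoe1 : ((δ⁻¹ • vδ - hV : ↥V) : E) = δ⁻¹ • (fam δ - f₀) - h := rfl
      have hnormeq : ‖δ⁻¹ • (fam δ - f₀) - h‖ = ‖δ⁻¹ • vδ - hV‖ := by
        rw [← hcoe1, Submodule.norm_coe]
      have hcoe2 : ((δ⁻¹ • wδ - fhatV : ↥V) : E)
          = δ⁻¹ • ((L δ - L 0) f₀) - fhat := rfl
      have hnormeq2 : ‖δ⁻¹ • wδ - fhatV‖ = ‖δ⁻¹ • ((L δ - L 0) f₀) - fhat‖ := by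
        rw [← Submodule.norm_coe, hcoe2]
      have hnormeq3 : ‖fhatV‖ = ‖fhat‖ := by
        rw [← Submodule.norm_coe]
      have hdiffinv : ((u⁻¹ : (↥V →L[ℝ] ↥V)ˣ) : ↥V →L[ℝ] ↥V)
            - ((u0⁻¹ : (↥V →L[ℝ] ↥V)ˣ) : ↥V →L[ℝ] ↥V)
          = ((u⁻¹ : (↥V →L[ℝ] ↥V)ˣ) : ↥V →L[ℝ] ↥V)
            * (((u0 : ↥V →L[ℝ] ↥V)) - ((u : ↥V →L[ℝ] ↥V)))
            * ((u0⁻¹ : (↥V →L[ℝ] ↥V)ˣ) : ↥V →L[ℝ] ↥V) := by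
        have e1 : ((u⁻¹ : (↥V →L[ℝ] ↥V)ˣ) : ↥V →L[ℝ] ↥V)
            * (((u0 : ↥V →L[ℝ] ↥V)) - ((u : ↥V →L[ℝ] ↥V)))
            * ((u0⁻¹ : (↥V →L[ℝ] ↥V)ˣ) : ↥V →L[ℝ] ↥V)
            = ((u⁻¹ : (↥V →L[ℝ] ↥V)ˣ) : ↥V →L[ℝ] ↥V)
              - ((u0⁻¹ : (↥V →L[ℝ] ↥V)ˣ) : ↥V →L[ℝ] ↥V) := by
          rw [mul_sub, Units.inv_mul, sub_mul, one_mul, mul_assoc, Units.mul_inv, mul_one]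
        exact e1.symm
      have hu0u : (((u0 : ↥V →L[ℝ] ↥V)) - ((u : ↥V →L[ℝ] ↥V))) = T δ - T 0 := by
        rw [hu0, hu]; abel
      have hdiffnorm : ‖((u⁻¹ : (↥V →L[ℝ] ↥V)ˣ) : ↥V →L[ℝ] ↥V)
            - ((u0⁻¹ : (↥V →L[ℝ] ↥V)ˣ) : ↥V →L[ℝ] ↥V)‖ ≤ 2*C * (K*δ) * C := by
        rw [hdiffinv, hu0u]
        calc ‖((u⁻¹ : (↥V →L[ℝ] ↥V)ˣ) : ↥V →L[ℝ] ↥V) * (T δ - T 0)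
              * ((u0⁻¹ : (↥V →L[ℝ] ↥V)ˣ) : ↥V →L[ℝ] ↥V)‖
            ≤ ‖((u⁻¹ : (↥V →L[ℝ] ↥V)ˣ) : ↥V →L[ℝ] ↥V) * (T δ - T 0)‖ * C :=
              hmulVle _ _
          _ ≤ (‖((u⁻¹ : (↥V →L[ℝ] ↥V)ˣ) : ↥V →L[ℝ] ↥V)‖ * ‖T δ - T 0‖) * C :=
              mul_le_mul_of_nonneg_right (hmulVle _ _) hC0
          _ ≤ (2*C * (K*δ)) * C := by
              refine mul_le_mul_of_nonneg_right ?_ hC0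
              exact mul_le_mul hunorm (hTsub δ hδ') (norm_nonneg (T δ - T 0)) (by positivity)
      calc ‖δ⁻¹ • (fam δ - f₀) - h‖ = ‖δ⁻¹ • vδ - hV‖ := hnormeq
        _ ≤ ‖((u⁻¹ : (↥V →L[ℝ] ↥V)ˣ) : ↥V →L[ℝ] ↥V) (δ⁻¹ • wδ - fhatV)‖
            + ‖(((u⁻¹ : (↥V →L[ℝ] ↥V)ˣ) : ↥V →L[ℝ] ↥V)
                - ((u0⁻¹ : (↥V →L[ℝ] ↥V)ˣ) : ↥V →L[ℝ] ↥V)) fhatV‖ := by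
            rw [hdecomp]; exact norm_add_le _ _
        _ ≤ (2*C) * ‖δ⁻¹ • wδ - fhatV‖ + (2*C * (K*δ) * C) * ‖fhatV‖ := by
            refine add_le_add ?_ ?_
            · exact le_trans (ContinuousLinearMap.le_opNorm _ _)
                (mul_le_mul_of_nonneg_right hunorm (norm_nonneg _))
            · exact le_trans (ContinuousLinearMap.le_opNorm _ _)
                (mul_le_mul_of_nonneg_right hdiffnorm (norm_nonneg _))
        _ = 2*C*‖δ⁻¹ • ((L δ - L 0) f₀) - fhat‖ + (2*C*C*(K*‖fhat‖))*δ := by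
            rw [hnormeq2, hnormeq3]; ring
    have hev : ∀ᶠ δ in nhdsWithin (0:ℝ) (Set.Ioi 0), δ ∈ Set.Ioo (0:ℝ) δ₂ := by
      have h1 : ∀ᶠ δ in nhds (0:ℝ), δ < δ₂ := gt_mem_nhds hδ₂pos
      filter_upwards [self_mem_nhdsWithin, h1.filter_mono nhdsWithin_le_nhds] with δ ha hb
      exact ⟨ha, hb⟩
    refine squeeze_zero'
      (g := fun δ : ℝ => 2*C*‖δ⁻¹ • ((L δ - L 0) f₀) - fhat‖ + (2*C*C*(K*‖fhat‖))*δ)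
      ?_ ?_ ?_
    · exact Filter.Eventually.of_forall (fun δ => norm_nonneg _)
    · filter_upwards [hev] with δ hδ
      exact hbound δ hδ
    · have t1 : Filter.Tendsto (fun δ : ℝ => 2*C*‖δ⁻¹ • ((L δ - L 0) f₀) - fhat‖)
          (nhdsWithin 0 (Set.Ioi 0)) (nhds 0) := by
        have := hderiv.const_mul (2*C)
        simpa using this
      have t2 : Filter.Tendsto (fun δ : ℝ => (2*C*C*(K*‖fhat‖))*δ)
          (nhdsWithin 0 (Set.Ioi 0)) (nhds 0) := by
        have hc : Filter.Tendsto (fun δ : ℝ => (2*C*C*(K*‖fhat‖))*δ)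
            (nhds (0:ℝ)) (nhds ((2*C*C*(K*‖fhat‖))*0)) :=
          ((continuous_const.mul continuous_id).tendsto 0)
        rw [mul_zero] at hc
        exact hc.mono_left nhdsWithin_le_nhds
      have := t1.add t2
      simpa using this

set_option maxHeartbeats 1000000 in
set_option synthInstance.maxHeartbeats 400000 in
/-- Linear response for a family of compact, integral-preserving
operators on `L²([0,1])`: under the mixing condition (A1) on `L 0`, Lipschitz
closeness `‖L δ − L 0‖ ≤ K δ`, and the existence of a derivative `f̂ ∈ V` at `f₀`,
the perturbed operators have unique normalized fixed points `f_δ` for small `δ`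
and `(f_δ − f₀)/δ → h` in `L²`, where `h ∈ V` solves `h − L 0 h = f̂`. -/
theorem linear_response_invariant_density
    (δbar : ℝ) (hδbar : 0 < δbar)
    (L : ℝ → (Lp ℝ 2 μ01 →L[ℝ] Lp ℝ 2 μ01))
    (hcomp : ∀ δ ∈ Set.Ico (0 : ℝ) δbar, IsCompactOperator (L δ))
    (hint : ∀ δ ∈ Set.Ico (0 : ℝ) δbar, ∀ g : Lp ℝ 2 μ01,
      ∫ x, (L δ g) x ∂μ01 = ∫ x, g x ∂μ01)
    (hmix : ∀ g : Lp ℝ 2 μ01, (∫ x, g x ∂μ01) = 0 →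
      Filter.Tendsto (fun n : ℕ => ‖((L 0) ^ n) g‖) Filter.atTop (nhds 0))
    (f₀ : Lp ℝ 2 μ01) (hf₀fix : L 0 f₀ = f₀) (hf₀int : ∫ x, f₀ x ∂μ01 = 1)
    (K : ℝ) (hK : 0 ≤ K)
    (hLip : ∀ δ ∈ Set.Ico (0 : ℝ) δbar, ‖L δ - L 0‖ ≤ K * δ)
    (fhat : Lp ℝ 2 μ01) (hfhatV : ∫ x, fhat x ∂μ01 = 0)
    (hderiv : Filter.Tendsto (fun δ : ℝ => ‖δ⁻¹ • ((L δ - L 0) f₀) - fhat‖)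
      (nhdsWithin 0 (Set.Ioi 0)) (nhds 0)) :
    ∃ δ₂ : ℝ, 0 < δ₂ ∧ δ₂ ≤ δbar ∧
      (∀ δ ∈ Set.Ico (0 : ℝ) δ₂,
        ∃! fδ : Lp ℝ 2 μ01, L δ fδ = fδ ∧ ∫ x, fδ x ∂μ01 = 1) ∧
      (∀ fam : ℝ → Lp ℝ 2 μ01,
        (∀ δ ∈ Set.Ico (0 : ℝ) δ₂, L δ (fam δ) = fam δ ∧ ∫ x, (fam δ) x ∂μ01 = 1) →
        ∀ h : Lp ℝ 2 μ01, (∫ x, h x ∂μ01) = 0 → h - L 0 h = fhat →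
          Filter.Tendsto (fun δ : ℝ => ‖δ⁻¹ • (fam δ - f₀) - h‖)
            (nhdsWithin 0 (Set.Ioi 0)) (nhds 0)) := by
  classical
  have hμuniv : μ01 Set.univ ≠ ⊤ := by simp [μ01, Real.volume_Icc]
  set one : Lp ℝ 2 μ01 := indicatorConstLp 2 MeasurableSet.univ hμuniv (1:ℝ) with honedef
  set Il : Lp ℝ 2 μ01 →L[ℝ] ℝ := innerSL ℝ one with hIldef
  have hI : ∀ g : Lp ℝ 2 μ01, Il g = ∫ x, g x ∂μ01 := by
    intro g
    have h1 : Il g = inner ℝ one g := rfl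
    rw [h1, honedef, L2.inner_indicatorConstLp_one MeasurableSet.univ hμuniv g,
      Measure.restrict_univ]
  have main := aux_linear_response Il δbar hδbar L hcomp
    (by intro δ hδ g; rw [hI, hI, hint δ hδ g])
    (by intro g hg; exact hmix g (by rw [← hI]; exact hg))
    f₀ hf₀fix (by rw [hI]; exact hf₀int) K hK hLip
    fhat (by rw [hI]; exact hfhatV) hderiv
  simpa only [hI] using main
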